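/- Let K = {a,b}, n ≥ 1, p ∈ [0,1], and let x ∈ K^n have n_a(x) entries equal to a. For a target histogram with n_a(y) a's and n_b(y) = n − n_a(y) b's: Σ_{w ∈ K^n, histogram of w = (n_a(y), n_b(y))} p^{m(x,w)} (1−p)^{n−m(x,w)} = Σ_{m_a = max(n_a(x)−n_b(y), 0)}^{min(n_a(x), n_a(y))} C(n_a(x), m_a) · C(n_b(x), n_b(x)−n_a(y)+m_a) · p^{2m_a + n_b(x) − n_a(y)} · (1−p)^{n − 2m_a − n_b(x) + n_a(y)}, where m(x,w) is the number of coordinates on which x and w agree. -/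

import Mathlib

/-- explicit binomial formula for the probability that binary
randomized response maps a dataset x to an output with a given histogram
(n_a(y) entries equal to a, n_b(y) = n − n_a(y) entries equal to b). -/
theorem stmt7 (n : ℕ) (hn : 1 ≤ n) (p : ℝ) (hp0 : 0 ≤ p) (hp1 : p ≤ 1)
    (x : Fin n → Bool) (nay : ℕ) (hnay : nay ≤ n) :
    let na : (Fin n → Bool) → ℕ := fun z => (Finset.univ.filter fun i => z i = true).card
    let nb : (Fin n → Bool) → ℕ := fun z => n - na z
    let m : (Fin n → Bool) → (Fin n → Bool) → ℕ :=
      fun u v => (Finset.univ.filter fun i => u i = v i).card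
    ∑ w ∈ Finset.univ.filter (fun w : Fin n → Bool => na w = nay),
        p ^ m x w * (1 - p) ^ (n - m x w)
      = ∑ ma ∈ Finset.Icc (na x - (n - nay)) (min (na x) nay),
          ((na x).choose ma : ℝ) * ((nb x).choose (nb x + ma - nay) : ℝ) *
            p ^ (2 * ma + nb x - nay) * (1 - p) ^ (n - (2 * ma + nb x - nay)) := by
  intro na nb m
  classical
  set A : Finset (Fin n) := Finset.univ.filter (fun i => x i = true) with hA
  set B : Finset (Fin n) := Finset.univ.filter (fun i => x i = false) with hB
  have hAB : Disjoint A B := by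
    rw [Finset.disjoint_left]
    intro i hiA hiB
    rw [hA, Finset.mem_filter] at hiA
    rw [hB, Finset.mem_filter] at hiB
    simp [hiA.2] at hiB
  have hABunion : A ∪ B = Finset.univ := by
    ext i
    simp only [hA, hB, Finset.mem_union, Finset.mem_filter, Finset.mem_univ, true_and]
    cases x i <;> simp
  have hAcard : A.card = na x := rfl
  have hn' : A.card + B.card = n := by
    rw [← Finset.card_union_of_disjoint hAB, hABunion, Finset.card_univ, Fintype.card_fin]
  have hBcard : B.card = n - na x := by omega
  have hnax : na x ≤ n := by omega
  -- split of na w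
  have hsplit : ∀ w : Fin n → Bool,
      na w = (A.filter (fun i => w i = true)).card + (B.filter (fun i => w i = true)).card := by
    intro w
    have h1 : Finset.univ.filter (fun i => w i = true)
        = A.filter (fun i => w i = true) ∪ B.filter (fun i => w i = true) := by
      rw [← Finset.filter_union, hABunion]
    show (Finset.univ.filter (fun i => w i = true)).card = _
    rw [h1, Finset.card_union_of_disjoint
      (hAB.mono (Finset.filter_subset _ _) (Finset.filter_subset _ _))]
  -- split of m x w
  have hm : ∀ w : Fin n → Bool,
      m x w = (A.filter (fun i => w i = true)).card + (B.filter (fun i => w i = false)).card := by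
    intro w
    have h1 : Finset.univ.filter (fun i => x i = w i)
        = A.filter (fun i => w i = true) ∪ B.filter (fun i => w i = false) := by
      ext i
      simp only [hA, hB, Finset.mem_union, Finset.mem_filter, Finset.mem_univ, true_and]
      cases hx : x i <;> cases hw : w i <;> simp
    show (Finset.univ.filter (fun i => x i = w i)).card = _
    rw [h1, Finset.card_union_of_disjoint
      (hAB.mono (Finset.filter_subset _ _) (Finset.filter_subset _ _))]
  have hBsplit : ∀ w : Fin n → Bool,
      (B.filter (fun i => w i = true)).card + (B.filter (fun i => w i = false)).card = B.card := by
    intro w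
    have h2 : B.filter (fun i => w i = false) = B.filter (fun i => ¬ (w i = true)) := by
      apply Finset.filter_congr; intro i _; cases w i <;> simp
    rw [h2, Finset.card_filter_add_card_filter_not]
  -- fiberwise decomposition
  have hmaps : ∀ w ∈ Finset.univ.filter (fun w : Fin n → Bool => na w = nay),
      (A.filter (fun i => w i = true)).card
        ∈ Finset.Icc (na x - (n - nay)) (min (na x) nay) := by
    intro w hw
    rw [Finset.mem_filter] at hw
    have h1 := hsplit w
    have h2 : (A.filter (fun i => w i = true)).card ≤ A.card :=
      Finset.card_le_card (Finset.filter_subset _ _)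
    have h3 : (B.filter (fun i => w i = true)).card ≤ B.card :=
      Finset.card_le_card (Finset.filter_subset _ _)
    rw [Finset.mem_Icc]
    omega
  rw [← Finset.sum_fiberwise_of_maps_to hmaps (fun w => p ^ m x w * (1 - p) ^ (n - m x w))]
  apply Finset.sum_congr rfl
  intro ma hma
  rw [Finset.mem_Icc] at hma
  have hma1 : ma ≤ na x := by omega
  have hma2 : ma ≤ nay := by omega
  have hma3 : nay - ma ≤ B.card := by omega
  have harg : B.card + ma - nay = B.card - (nay - ma) := by omega
  -- constant value on the fiber
  have hconst : ∀ w ∈ (Finset.univ.filter (fun w : Fin n → Bool => na w = nay)).filter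
      (fun w => (A.filter (fun i => w i = true)).card = ma),
      p ^ m x w * (1 - p) ^ (n - m x w)
        = p ^ (2 * ma + nb x - nay) * (1 - p) ^ (n - (2 * ma + nb x - nay)) := by
    intro w hw
    rw [Finset.mem_filter, Finset.mem_filter] at hw
    obtain ⟨⟨-, hw1⟩, hw2⟩ := hw
    have h1 := hsplit w
    have h2 := hm w
    have h3 := hBsplit w
    have hmx : m x w = 2 * ma + nb x - nay := by
      show m x w = 2 * ma + (n - na x) - nay
      omega
    rw [hmx]
  rw [Finset.sum_congr rfl hconst, Finset.sum_const, nsmul_eq_mul]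
  -- cardinality of the fiber
  have key : ∀ s t : Finset (Fin n), s ⊆ A → t ⊆ B →
      A.filter (fun i => decide (i ∈ s ∪ t) = true) = s
        ∧ B.filter (fun i => decide (i ∈ s ∪ t) = true) = t := by
    intro s t hs ht
    constructor
    · ext i
      simp only [Finset.mem_filter, decide_eq_true_eq, Finset.mem_union]
      constructor
      · rintro ⟨hiA, hi | hi⟩
        · exact hi
        · exact absurd hiA (Finset.disjoint_right.mp hAB (ht hi))
      · intro hi; exact ⟨hs hi, Or.inl hi⟩
    · ext i
      simp only [Finset.mem_filter, decide_eq_true_eq, Finset.mem_union]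
      constructor
      · rintro ⟨hiB, hi | hi⟩
        · exact absurd hiB (Finset.disjoint_left.mp hAB (hs hi))
        · exact hi
      · intro hi; exact ⟨ht hi, Or.inr hi⟩
  have hcard : ((Finset.univ.filter (fun w : Fin n → Bool => na w = nay)).filter
      (fun w => (A.filter (fun i => w i = true)).card = ma)).card
      = (na x).choose ma * B.card.choose (nay - ma) := by
    rw [← hAcard, ← Finset.card_powersetCard, ← Finset.card_powersetCard,
      ← Finset.card_product]
    apply Finset.card_nbij'
      (fun w => (A.filter (fun i => w i = true), B.filter (fun i => w i = true)))
      (fun st => fun i => decide (i ∈ st.1 ∪ st.2))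
    · intro w hw
      rw [Finset.mem_coe, Finset.mem_filter, Finset.mem_filter] at hw
      obtain ⟨⟨-, hw1⟩, hw2⟩ := hw
      have h1 := hsplit w
      rw [Finset.mem_coe, Finset.mem_product, Finset.mem_powersetCard, Finset.mem_powersetCard]
      refine ⟨⟨Finset.filter_subset _ _, hw2⟩, Finset.filter_subset _ _, ?_⟩
      show (B.filter (fun i => w i = true)).card = nay - ma
      omega
    · rintro ⟨s, t⟩ hst
      rw [Finset.mem_coe, Finset.mem_product, Finset.mem_powersetCard, Finset.mem_powersetCard] at hst
      obtain ⟨⟨hsA, hs⟩, htB, ht⟩ := hst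
      dsimp only at hsA hs htB ht
      obtain ⟨k1, k2⟩ := key s t hsA htB
      dsimp only
      rw [Finset.mem_coe, Finset.mem_filter, Finset.mem_filter]
      have hna : na (fun i => decide (i ∈ s ∪ t)) = nay := by
        have h1 := hsplit (fun i => decide (i ∈ s ∪ t))
        rw [k1, k2] at h1
        omega
      exact ⟨⟨Finset.mem_univ _, hna⟩, by rw [k1, hs]⟩
    · intro w hw
      funext i
      have h1 : (A.filter (fun j => w j = true) ∪ B.filter (fun j => w j = true))
          = Finset.univ.filter (fun j => w j = true) := by
        rw [← Finset.filter_union, hABunion]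
      dsimp only
      rw [h1]
      simp only [Finset.mem_filter, Finset.mem_univ, true_and]
      cases hwi : w i <;> simp [hwi]
    · rintro ⟨s, t⟩ hst
      rw [Finset.mem_coe, Finset.mem_product, Finset.mem_powersetCard, Finset.mem_powersetCard] at hst
      obtain ⟨⟨hsA, hs⟩, htB, ht⟩ := hst
      dsimp only at hsA hs htB ht
      obtain ⟨k1, k2⟩ := key s t hsA htB
      exact Prod.ext k1 k2
  rw [hcard]
  have hnb : nb x = n - na x := rfl
  have hchoose : (nb x).choose (nb x + ma - nay) = B.card.choose (nay - ma) := by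
    rw [hnb, ← hBcard]
    rw [harg, Nat.choose_symm hma3]
  rw [hchoose]
  push_cast
  ring
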